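/- Let B_in and B_out be directed graphs on a common vertex set V with distinguished vertex r ∈ V. The number of pairs of consistent cuts ((V_in⁰, V_in¹), (V_out⁰, V_out¹)) of B_in and B_out respectively, with r ∈ V_in⁰ and r ∈ V_out⁰, equals 2^((cc(B_in)−1)+(cc(B_out)−1)). In particular, this number is odd if and only if both B_in and B_out are weakly connected. -/

import Mathlib

attribute [local instance] Classical.propDecidable

variable {V : Type*} [Fintype V] [DecidableEq V]

/-- Weak reachability in the digraph with arc set `B`. -/
def wreach (B : Finset (V × V)) (u v : V) : Prop :=
  Relation.ReflTransGen (fun a b => (a, b) ∈ B ∨ (b, a) ∈ B) u v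

/-- The number of weakly connected components of the digraph `(V, B)`. -/
noncomputable def cc (B : Finset (V × V)) : ℕ :=
  (Finset.univ.image fun v : V => Finset.univ.filter fun u => wreach B v u).card
lemma wreach_refl (B : Finset (V × V)) (v : V) : wreach B v v := Relation.ReflTransGen.refl

lemma wreach_symm {B : Finset (V × V)} {u v : V} (h : wreach B u v) : wreach B v u :=
  by
    haveI : Std.Symm (fun a b : V => (a, b) ∈ B ∨ (b, a) ∈ B) := ⟨fun a b h => h.symm⟩
    exact (Relation.ReflTransGen.stdSymm (r := fun a b : V => (a, b) ∈ B ∨ (b, a) ∈ B)).symm _ _ h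

lemma wreach_trans {B : Finset (V × V)} {u v w : V} (h : wreach B u v) (h' : wreach B v w) :
    wreach B u w := h.trans h'

noncomputable def comp (B : Finset (V × V)) (v : V) : Finset V :=
  Finset.univ.filter fun u => wreach B v u

lemma mem_comp {B : Finset (V × V)} {v u : V} : u ∈ comp B v ↔ wreach B v u := by
  simp [comp]

lemma comp_eq_of_mem {B : Finset (V × V)} {v u : V} (h : u ∈ comp B v) :
    comp B u = comp B v := by
  ext w
  rw [mem_comp] at h ⊢
  rw [mem_comp]
  exact ⟨fun hw => wreach_trans h hw, fun hw => wreach_trans (wreach_symm h) hw⟩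

/-- A set is "closed" iff it is invariant under weak reachability. -/
lemma closed_iff {B : Finset (V × V)} {S : Finset V} :
    (∀ e ∈ B, (e.1 ∈ S ↔ e.2 ∈ S)) ↔ ∀ u v, wreach B u v → (u ∈ S ↔ v ∈ S) := by
  constructor
  · intro h u v huv
    induction huv with
    | refl => rfl
    | tail _ hab ih =>
      rw [ih]
      rcases hab with hab | hab
      · exact h _ hab
      · exact (h _ hab).symm
  · intro h e he
    exact h e.1 e.2 (Relation.ReflTransGen.single (Or.inl he))

lemma count_cuts (B : Finset (V × V)) (r : V) :
    (Finset.univ.filter fun S : Finset V =>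
        r ∈ S ∧ ∀ e ∈ B, (e.1 ∈ S ↔ e.2 ∈ S)).card = 2 ^ (cc B - 1) := by
  classical
  set comps : Finset (Finset V) :=
    Finset.univ.image fun v : V => Finset.univ.filter fun u => wreach B v u with hcomps
  have hcomp_mem : ∀ v : V, comp B v ∈ comps := fun v =>
    Finset.mem_image.2 ⟨v, Finset.mem_univ v, rfl⟩
  have hcomps_form : ∀ C ∈ comps, ∃ v, C = comp B v := by
    intro C hC
    rcases Finset.mem_image.1 hC with ⟨v, _, rfl⟩
    exact ⟨v, rfl⟩
  set Cr := comp B r with hCr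
  have key : (Finset.univ.filter fun S : Finset V =>
      r ∈ S ∧ ∀ e ∈ B, (e.1 ∈ S ↔ e.2 ∈ S)).card
      = ((comps.erase Cr).powerset).card := by
    apply Finset.card_nbij' (i := fun S => (comps.erase Cr).filter (fun C => C ⊆ S))
      (j := fun T => Cr ∪ T.sup id)
    · intro S _
      exact Finset.mem_powerset.2 (Finset.filter_subset _ _)
    · intro T hT
      rw [Finset.mem_coe, Finset.mem_powerset] at hT
      simp only [Finset.coe_filter, Set.mem_setOf_eq, Finset.mem_filter, Finset.mem_univ, true_and]
      constructor
      · exact Finset.mem_union_left _ (mem_comp.2 (wreach_refl B r))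
      · rw [closed_iff]
        intro u v huv
        have inv : ∀ C ∈ comps, (u ∈ C ↔ v ∈ C) := by
          intro C hC
          rcases hcomps_form C hC with ⟨w, rfl⟩
          rw [mem_comp, mem_comp]
          exact ⟨fun h => wreach_trans h huv, fun h => wreach_trans h (wreach_symm huv)⟩
        simp only [Finset.mem_union, Finset.mem_sup, id]
        constructor
        · rintro (h | ⟨C, hC, hCu⟩)
          · exact Or.inl ((inv Cr (hcomp_mem r)).1 h)
          · exact Or.inr ⟨C, hC, (inv C (Finset.mem_of_mem_erase (hT hC))).1 hCu⟩
        · rintro (h | ⟨C, hC, hCv⟩)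
          · exact Or.inl ((inv Cr (hcomp_mem r)).2 h)
          · exact Or.inr ⟨C, hC, (inv C (Finset.mem_of_mem_erase (hT hC))).2 hCv⟩
    · intro S hS
      simp only [Finset.coe_filter, Set.mem_setOf_eq, Finset.mem_filter, Finset.mem_univ, true_and] at hS
      obtain ⟨hrS, hclosed⟩ := hS
      rw [closed_iff] at hclosed
      have hcomp_sub : ∀ v ∈ S, comp B v ⊆ S := by
        intro v hv u hu
        exact (hclosed v u (mem_comp.1 hu)).1 hv
      ext v
      simp only [Finset.mem_union, Finset.mem_sup, Finset.mem_filter, Finset.mem_erase, id]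
      constructor
      · rintro (h | ⟨C, ⟨⟨_, hCc⟩, hCS⟩, hvC⟩)
        · exact hcomp_sub r hrS h
        · exact hCS hvC
      · intro hvS
        by_cases hvr : comp B v = Cr
        · exact Or.inl (hvr ▸ mem_comp.2 (wreach_refl B v))
        · exact Or.inr ⟨comp B v, ⟨⟨hvr, hcomp_mem v⟩, hcomp_sub v hvS⟩,
            mem_comp.2 (wreach_refl B v)⟩
    · intro T hT
      rw [Finset.mem_coe, Finset.mem_powerset] at hT
      ext C
      simp only [Finset.mem_filter, Finset.mem_erase]
      constructor
      · rintro ⟨⟨hCr, hCc⟩, hsub⟩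
        rcases hcomps_form C hCc with ⟨w, rfl⟩
        have hw : w ∈ Cr ∪ T.sup id := hsub (mem_comp.2 (wreach_refl B w))
        rcases Finset.mem_union.1 hw with h | h
        · exact absurd (comp_eq_of_mem h) hCr
        · rcases Finset.mem_sup.1 h with ⟨C', hC', hwC'⟩
          rcases hcomps_form C' (Finset.mem_of_mem_erase (hT hC')) with ⟨x, rfl⟩
          rwa [comp_eq_of_mem hwC']
      · intro hC
        refine ⟨Finset.mem_erase.1 (hT hC), ?_⟩
        intro v hv
        exact Finset.mem_union_right _ (Finset.mem_sup.2 ⟨C, hC, hv⟩)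
  rw [key, Finset.card_powerset, Finset.card_erase_of_mem (hcomp_mem r)]
  rfl

lemma cc_pos (B : Finset (V × V)) [Nonempty V] : 0 < cc B := by
  rw [cc, Finset.card_pos]
  exact ⟨_, Finset.mem_image.2 ⟨Classical.arbitrary V, Finset.mem_univ _, rfl⟩⟩

lemma cc_eq_one_iff (B : Finset (V × V)) [Nonempty V] :
    cc B = 1 ↔ ∀ a b : V, wreach B a b := by
  constructor
  · intro h a b
    rw [cc, Finset.card_eq_one] at h
    obtain ⟨C, hC⟩ := h
    have ha : comp B a ∈ ({C} : Finset (Finset V)) := hC ▸ Finset.mem_image.2 ⟨a, Finset.mem_univ a, rfl⟩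
    have hb : comp B b ∈ ({C} : Finset (Finset V)) := hC ▸ Finset.mem_image.2 ⟨b, Finset.mem_univ b, rfl⟩
    rw [Finset.mem_singleton] at ha hb
    have : b ∈ comp B a := by
      rw [ha, ← hb]; exact mem_comp.2 (wreach_refl B b)
    exact mem_comp.1 this
  · intro h
    rw [cc, Finset.card_eq_one]
    refine ⟨Finset.univ, ?_⟩
    apply Finset.eq_singleton_iff_nonempty_unique_mem.2
    constructor
    · exact ⟨_, Finset.mem_image.2 ⟨Classical.arbitrary V, Finset.mem_univ _, rfl⟩⟩
    · intro C hC
      rcases Finset.mem_image.1 hC with ⟨v, _, rfl⟩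
      ext u
      simp [h v u]

/-- The number of pairs of consistent cuts of `Bin` and `Bout` with `r` on the `0`-side of
both is `2 ^ ((cc(Bin) − 1) + (cc(Bout) − 1))`; in particular this number is odd iff both
`Bin` and `Bout` are weakly connected. -/
theorem stmt_3 [Nonempty V] (Bin Bout : Finset (V × V)) (r : V) :
    (Finset.univ.filter fun p : Finset V × Finset V =>
        (r ∈ p.1 ∧ ∀ e ∈ Bin, (e.1 ∈ p.1 ↔ e.2 ∈ p.1)) ∧
        (r ∈ p.2 ∧ ∀ e ∈ Bout, (e.1 ∈ p.2 ↔ e.2 ∈ p.2))).card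
      = 2 ^ ((cc Bin - 1) + (cc Bout - 1)) ∧
    (Odd (Finset.univ.filter fun p : Finset V × Finset V =>
        (r ∈ p.1 ∧ ∀ e ∈ Bin, (e.1 ∈ p.1 ↔ e.2 ∈ p.1)) ∧
        (r ∈ p.2 ∧ ∀ e ∈ Bout, (e.1 ∈ p.2 ↔ e.2 ∈ p.2))).card ↔
      (∀ a b : V, wreach Bin a b) ∧ (∀ a b : V, wreach Bout a b)) := by
  classical
  have hcard : (Finset.univ.filter fun p : Finset V × Finset V =>
        (r ∈ p.1 ∧ ∀ e ∈ Bin, (e.1 ∈ p.1 ↔ e.2 ∈ p.1)) ∧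
        (r ∈ p.2 ∧ ∀ e ∈ Bout, (e.1 ∈ p.2 ↔ e.2 ∈ p.2))).card
      = 2 ^ ((cc Bin - 1) + (cc Bout - 1)) := by
    have hsplit : (Finset.univ.filter fun p : Finset V × Finset V =>
        (r ∈ p.1 ∧ ∀ e ∈ Bin, (e.1 ∈ p.1 ↔ e.2 ∈ p.1)) ∧
        (r ∈ p.2 ∧ ∀ e ∈ Bout, (e.1 ∈ p.2 ↔ e.2 ∈ p.2)))
        = (Finset.univ.filter fun S : Finset V =>
            r ∈ S ∧ ∀ e ∈ Bin, (e.1 ∈ S ↔ e.2 ∈ S)) ×ˢ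
          (Finset.univ.filter fun S : Finset V =>
            r ∈ S ∧ ∀ e ∈ Bout, (e.1 ∈ S ↔ e.2 ∈ S)) := by
      ext p
      simp [Finset.mem_filter, Finset.mem_product, and_assoc]
    rw [hsplit, Finset.card_product, count_cuts Bin r, count_cuts Bout r, pow_add]
  refine ⟨hcard, ?_⟩
  rw [hcard, ← Nat.not_even_iff_odd, Nat.even_pow]
  constructor
  · intro h
    have h0 : (cc Bin - 1) + (cc Bout - 1) = 0 := by
      by_contra hne
      exact h ⟨even_two, hne⟩
    have h1 : cc Bin = 1 := by
      have := cc_pos (V := V) Bin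
      omega
    have h2 : cc Bout = 1 := by
      have := cc_pos (V := V) Bout
      omega
    exact ⟨(cc_eq_one_iff Bin).1 h1, (cc_eq_one_iff Bout).1 h2⟩
  · rintro ⟨h1, h2⟩
    rw [(cc_eq_one_iff Bin).2 h1, (cc_eq_one_iff Bout).2 h2]
    simp
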